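/- Let (X, ρ) be a metric space, μ a Borel probability measure, and φ ∈ Φ_ex with γ := γ_φ. If the φ-loss F^φ_μ is finite, then for all p, q ∈ X with ρ(p,q) ≤ 1, |F^φ_μ(p) − F^φ_μ(q)| ≤ ρ(p,q)·(γ·φ(1) + (γ−1)·min(F^φ_μ(p), F^φ_μ(q))). In particular, F^φ_μ is locally Lipschitz continuous. -/

import Mathlib

open Set Filter

/-- `Φ`: convex, strictly increasing bijections of `[0,∞)` (with `φ 0 = 0`). -/
def Phi (φ : ℝ → ℝ) : Prop :=
  ConvexOn ℝ (Ici 0) φ ∧ StrictMonoOn φ (Ici 0) ∧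
    Set.BijOn φ (Ici 0) (Ici 0) ∧ φ 0 = 0

/-- `γ_φ = sup_{x ≥ 0} φ(1+x)/(φ(1)+φ(x))`, valued in `[0,∞]`. -/
noncomputable def gam (φ : ℝ → ℝ) : ENNReal :=
  ⨆ x : Ici (0:ℝ), ENNReal.ofReal (φ (1 + x) / (φ 1 + φ x))

/-- If `φ ∈ Φ_ex` with `γ_φ = γ` and the φ-loss `F(x) = ∫ φ(ρ(x,y)) dμ(y)` is
finite (integrable) everywhere, then for all `p, q` with `ρ(p,q) ≤ 1`,
`|F(p) − F(q)| ≤ ρ(p,q) (γ φ(1) + (γ−1) min(F(p), F(q)))`;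
in particular `F` is locally Lipschitz. -/
theorem stmt_16 {X : Type*} [MetricSpace X] [MeasurableSpace X] [BorelSpace X]
    (μ : MeasureTheory.Measure X) [MeasureTheory.IsProbabilityMeasure μ]
    (φ : ℝ → ℝ) (hφ : Phi φ) (γ : ℝ)
    (hγ : gam φ = ENNReal.ofReal γ)
    (hint : ∀ x : X, MeasureTheory.Integrable (fun y => φ (dist x y)) μ)
    (F : X → ℝ) (hF : ∀ x, F x = ∫ y, φ (dist x y) ∂μ) :
    (∀ p q : X, dist p q ≤ 1 →
      |F p - F q| ≤ dist p q * (γ * φ 1 + (γ - 1) * min (F p) (F q))) ∧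
    LocallyLipschitz F := by
  obtain ⟨hconv, hsm, _, hφ0⟩ := hφ
  have hmono : MonotoneOn φ (Ici 0) := hsm.monotoneOn
  have hφ1 : 0 < φ 1 := by
    have := hsm (self_mem_Ici : (0:ℝ) ∈ Ici 0) (by norm_num : (1:ℝ) ∈ Ici 0) one_pos
    linarith [this, hφ0.ge]
  have hnn : ∀ x : ℝ, 0 ≤ x → 0 ≤ φ x := by
    intro x hx
    have := hmono (self_mem_Ici : (0:ℝ) ∈ Ici 0) hx hx
    linarith [hφ0.le]
  -- γ ≥ 1
  have hle0 : (ENNReal.ofReal (φ (1 + (0:ℝ)) / (φ 1 + φ 0)) : ENNReal) ≤ gam φ :=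
    le_iSup (fun x : Ici (0:ℝ) => ENNReal.ofReal (φ (1 + x) / (φ 1 + φ x)))
      (⟨0, self_mem_Ici⟩ : Ici (0:ℝ))
  have hone : (1 : ENNReal) ≤ ENNReal.ofReal γ := by
    rw [hγ] at hle0
    simpa [hφ0, div_self hφ1.ne'] using hle0
  have hγ1 : (1:ℝ) ≤ γ := by
    by_contra h
    push_neg at h
    have : ENNReal.ofReal γ < 1 := by
      rcases le_or_gt γ 0 with h0 | h0
      · simp [ENNReal.ofReal_eq_zero.2 h0]
      · rw [← ENNReal.ofReal_one]
        exact (ENNReal.ofReal_lt_ofReal_iff one_pos).2 h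
    exact absurd hone this.not_ge
  have hγ0 : (0:ℝ) ≤ γ := le_trans zero_le_one hγ1
  -- key: φ(1+x) ≤ γ (φ 1 + φ x)
  have hkey : ∀ x : ℝ, 0 ≤ x → φ (1 + x) ≤ γ * (φ 1 + φ x) := by
    intro x hx
    have hden : 0 < φ 1 + φ x := by linarith [hnn x hx]
    have hle : (ENNReal.ofReal (φ (1 + x) / (φ 1 + φ x)) : ENNReal) ≤ ENNReal.ofReal γ := by
      rw [← hγ]
      exact le_iSup (fun z : Ici (0:ℝ) => ENNReal.ofReal (φ (1 + z) / (φ 1 + φ z))) ⟨x, hx⟩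
    have hr : φ (1 + x) / (φ 1 + φ x) ≤ γ := by
      rcases le_or_gt (φ (1 + x) / (φ 1 + φ x)) 0 with h0 | h0
      · linarith
      · exact (ENNReal.ofReal_le_ofReal_iff hγ0).1 hle
    calc φ (1 + x) = φ (1 + x) / (φ 1 + φ x) * (φ 1 + φ x) := by field_simp
      _ ≤ γ * (φ 1 + φ x) := mul_le_mul_of_nonneg_right hr hden.le
  -- pointwise convexity bound
  have hpt : ∀ x d : ℝ, 0 ≤ x → 0 ≤ d → d ≤ 1 →
      φ (x + d) ≤ φ x + d * (γ * φ 1 + (γ - 1) * φ x) := by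
    intro x d hx hd hd1
    have hc := hconv.2 (hx : x ∈ Ici 0) (by simp only [mem_Ici]; linarith : x + 1 ∈ Ici 0)
      (by linarith : (0:ℝ) ≤ 1 - d) hd (by ring)
    simp only [smul_eq_mul] at hc
    have hx' : (1 - d) * x + d * (x + 1) = x + d := by ring
    rw [hx'] at hc
    have := hkey x hx
    have hcomm : φ (x + 1) = φ (1 + x) := by rw [add_comm]
    nlinarith [hc, this]
  have hFnn : ∀ x : X, 0 ≤ F x := by
    intro x
    rw [hF x]
    exact MeasureTheory.integral_nonneg fun y => hnn _ dist_nonneg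
  have hCnn : ∀ x : X, 0 ≤ γ * φ 1 + (γ - 1) * F x := by
    intro x
    have := hFnn x
    nlinarith
  -- main one-sided estimate
  have main : ∀ p q : X, dist p q ≤ 1 →
      F p - F q ≤ dist p q * (γ * φ 1 + (γ - 1) * F q) := by
    intro p q hd1
    set d := dist p q with hdd
    have hd0 : 0 ≤ d := dist_nonneg
    have hptw : ∀ y : X, φ (dist p y) ≤
        (1 + d * (γ - 1)) * φ (dist q y) + d * (γ * φ 1) := by
      intro y
      have htri : dist p y ≤ dist q y + d := by
        have := dist_triangle p q y
        rw [hdd]; linarith [this]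
      have h1 : φ (dist p y) ≤ φ (dist q y + d) :=
        hmono (dist_nonneg : dist p y ∈ Ici 0)
          (by simp only [mem_Ici]; positivity : dist q y + d ∈ Ici 0) htri
      have h2 := hpt (dist q y) d dist_nonneg hd0 hd1
      nlinarith [h1, h2]
    have hint2 : MeasureTheory.Integrable
        (fun y => (1 + d * (γ - 1)) * φ (dist q y) + d * (γ * φ 1)) μ :=
      ((hint q).const_mul _).add (MeasureTheory.integrable_const _)
    have hInt := MeasureTheory.integral_mono (hint p) hint2 hptw
    rw [MeasureTheory.integral_add ((hint q).const_mul _)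
        (MeasureTheory.integrable_const _),
      MeasureTheory.integral_const_mul, MeasureTheory.integral_const] at hInt
    have e1 : ∫ a, φ (dist p a) ∂μ = F p := (hF p).symm
    have e2 : ∫ a, φ (dist q a) ∂μ = F q := (hF q).symm
    have hμ : μ.real Set.univ = 1 := by simp
    rw [e1, e2, hμ] at hInt
    simp only [one_smul] at hInt
    nlinarith [hInt]
  constructor
  · intro p q hd1
    have hd1' : dist q p ≤ 1 := by rwa [dist_comm]
    rcases le_total (F p) (F q) with h | h
    · rw [min_eq_left h, abs_sub_comm, abs_of_nonneg (by linarith)]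
      have := main q p hd1'
      rw [dist_comm q p] at this
      linarith
    · rw [min_eq_right h, abs_of_nonneg (by linarith)]
      exact main p q hd1
  · intro x
    set C : ℝ := γ * φ 1 + (γ - 1) * (γ * (φ 1 + F x)) with hC
    have hCnn' : 0 ≤ C := by
      have h1 : 0 ≤ (γ - 1) * (γ * (φ 1 + F x)) :=
        mul_nonneg (by linarith) (mul_nonneg hγ0 (by linarith [hFnn x]))
      have h2 : 0 ≤ γ * φ 1 := mul_nonneg hγ0 hφ1.le
      rw [hC]; linarith
    refine ⟨C.toNNReal, Metric.ball x (1/2), Metric.ball_mem_nhds x (by norm_num), ?_⟩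
    apply LipschitzOnWith.of_dist_le_mul
    intro p hp q hq
    simp only [Metric.mem_ball] at hp hq
    have hbound : ∀ z : X, dist z x < 1/2 → F z ≤ γ * (φ 1 + F x) := by
      intro z hz
      have h := main z x (by linarith)
      have hd : dist z x ≤ 1 := by linarith
      have := hCnn x
      nlinarith [dist_nonneg (x := z) (y := x), h]
    have hd : dist p q ≤ 1 := by
      have := dist_triangle p x q
      rw [dist_comm x q] at this
      linarith
    have hmin : min (F p) (F q) ≤ γ * (φ 1 + F x) :=
      le_trans (min_le_left _ _) (hbound p hp)
    have hest : |F p - F q| ≤ dist p q * (γ * φ 1 + (γ - 1) * min (F p) (F q)) := by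
      rcases le_total (F p) (F q) with h | h
      · rw [min_eq_left h, abs_sub_comm, abs_of_nonneg (by linarith)]
        have := main q p (by rwa [dist_comm])
        rw [dist_comm q p] at this
        linarith
      · rw [min_eq_right h, abs_of_nonneg (by linarith)]
        exact main p q hd
    have hfinal : |F p - F q| ≤ dist p q * C := by
      refine le_trans hest ?_
      apply mul_le_mul_of_nonneg_left _ dist_nonneg
      rw [hC]
      nlinarith [hmin, hγ1]
    rw [Real.dist_eq, Real.coe_toNNReal C hCnn', mul_comm]
    exact hfinal
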